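/- Let A be a finite-dimensional degenerate evolution algebra with natural basis B = {e_i}_{i ∈ Λ} such that A ≠ rad(A) and the graph Γ(A,B) is connected. Then V = span{e_i : i ∈ Λ \ λ_m(B)} (where m = asi(A), so rad(A) = span{e_i : i ∈ λ_m(B)}) is not an ideal of A. -/

import Mathlib

open Submodule

section EvolutionPreamble

/-- The set of `k`-th generation descendants of a vertex in a directed graph
given by an edge relation `E`; `Dk E 0 i = {i}`. -/
def Dk {V : Type*} (E : V → V → Prop) : ℕ → V → Set V
  | 0, i => {i}
  | n + 1, i => {k | ∃ j ∈ Dk E n i, E j k}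

/-- A vertex is cyclic if there is a (possibly trivial) path from it to a vertex
lying on a cycle. -/
def IsCyclicVertex {V : Type*} (E : V → V → Prop) (i : V) : Prop :=
  ∃ j, Relation.ReflTransGen E i j ∧ Relation.TransGen E j j

/-- Connectedness of a directed graph: every nontrivial partition of the
vertex set is crossed by an edge (in one direction or the other). -/
def GraphConnected {V : Type*} (E : V → V → Prop) : Prop :=
  ∀ s : Set V, s.Nonempty → sᶜ.Nonempty → ∃ x ∈ s, ∃ y ∈ sᶜ, E x y ∨ E y x

variable {K : Type*} [Field K] {A : Type*} [NonUnitalNonAssocRing A]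
  [Module K A] [SMulCommClass K A A] [IsScalarTower K A A] {ι : Type*}

/-- A basis is natural if distinct basis vectors multiply to zero. -/
def IsNaturalBasis (B : Module.Basis ι K A) : Prop := ∀ i j, i ≠ j → B i * B j = 0

/-- Edge relation of the directed graph `Γ(A,B)` associated to an evolution
algebra `A` with natural basis `B`: `(i,k)` is an edge iff the structure
constant `w_{ik}` is nonzero. -/
def edge (B : Module.Basis ι K A) (i k : ι) : Prop := B.repr (B i * B i) k ≠ 0

/-- First-generation descendants in `Γ(A,B)`. -/
def D1 (B : Module.Basis ι K A) (i : ι) : Set ι := {k | edge B i k}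

/-- The increasing chain of index sets `λ_k(B)`: `λ_0 = ∅`,
`λ_{k+1}(B) = {i : D¹(i) ⊆ λ_k(B)}`.  In particular
`λ_1(B) = {i : e_i² = 0}`. -/
def lam (B : Module.Basis ι K A) : ℕ → Set ι
  | 0 => ∅
  | n + 1 => {i | ∀ k, edge B i k → k ∈ lam B n}

/-- `I` is a (two-sided) ideal. -/
def IsIdeal (I : Submodule K A) : Prop := ∀ x ∈ I, ∀ a : A, x * a ∈ I ∧ a * x ∈ I

/-- The absorption property: `xA ⊆ I` implies `x ∈ I`. -/
def HasAbsorption (I : Submodule K A) : Prop := ∀ x : A, (∀ a : A, x * a ∈ I) → x ∈ I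

/-- The absorption radical: intersection of all ideals with the absorption property. -/
def rad (K : Type*) (A : Type*) [Field K] [NonUnitalNonAssocRing A]
    [Module K A] [SMulCommClass K A A] [IsScalarTower K A A] : Submodule K A :=
  sInf {I : Submodule K A | IsIdeal I ∧ HasAbsorption I}

lemma rad_isIdeal : IsIdeal (rad K A) := by
  intro x hx a
  rw [rad, Submodule.mem_sInf] at hx
  constructor <;>
    · rw [rad, Submodule.mem_sInf]
      intro I hI
      first
        | exact (hI.1 x (hx I hI) a).1
        | exact (hI.1 x (hx I hI) a).2

/-- The annihilator `ann(A) = {x : xA = Ax = 0}` as a submodule. -/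
def annSub (K : Type*) (A : Type*) [Field K] [NonUnitalNonAssocRing A]
    [Module K A] [SMulCommClass K A A] [IsScalarTower K A A] : Submodule K A where
  carrier := {x | ∀ a : A, x * a = 0 ∧ a * x = 0}
  add_mem' := by
    intro x y hx hy a
    constructor
    · rw [add_mul, (hx a).1, (hy a).1, add_zero]
    · rw [mul_add, (hx a).2, (hy a).2, add_zero]
  zero_mem' := by intro a; simp
  smul_mem' := by
    intro c x hx a
    constructor
    · rw [smul_mul_assoc, (hx a).1, smul_zero]
    · rw [mul_smul_comm, (hx a).2, smul_zero]

/-- The upper annihilating series: `ann⁰(A) = 0`,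
`annⁱ⁺¹(A) = {x : xA ∪ Ax ⊆ annⁱ(A)}`. -/
def annSeries (K : Type*) (A : Type*) [Field K] [NonUnitalNonAssocRing A]
    [Module K A] [SMulCommClass K A A] [IsScalarTower K A A] : ℕ → Submodule K A
  | 0 => ⊥
  | n + 1 =>
    { carrier := {x | ∀ a : A, x * a ∈ annSeries K A n ∧ a * x ∈ annSeries K A n}
      add_mem' := by
        intro x y hx hy a
        constructor
        · rw [add_mul]; exact add_mem (hx a).1 (hy a).1
        · rw [mul_add]; exact add_mem (hx a).2 (hy a).2
      zero_mem' := by intro a; simp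
      smul_mem' := by
        intro c x hx a
        constructor
        · rw [smul_mul_assoc]; exact smul_mem _ c (hx a).1
        · rw [mul_smul_comm]; exact smul_mem _ c (hx a).2 }

/-- The annihilator stabilizing index `asi(A)`. -/
noncomputable def asi (K : Type*) (A : Type*) [Field K] [NonUnitalNonAssocRing A]
    [Module K A] [SMulCommClass K A A] [IsScalarTower K A A] : ℕ :=
  sInf {q : ℕ | annSeries K A q = annSeries K A (q + 1)}

/-- Product of two submodules (span of pairwise products). -/
def smulSub (I J : Submodule K A) : Submodule K A :=
  Submodule.span K (Set.image2 (· * ·) (I : Set A) (J : Set A))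

/-- Powers of a subalgebra/ideal, with `N^{k} = Σ_{i+j=k, i,j ≥ 1} Nⁱ Nʲ`. -/
def npow (I : Submodule K A) : ℕ → Submodule K A
  | 0 => ⊥
  | 1 => I
  | n + 2 => ⨆ i : Fin (n + 1), smulSub (npow I (i.1 + 1)) (npow I (n + 1 - i.1))
  termination_by n => n
  decreasing_by
  · have := i.isLt; omega
  · have := i.isLt; omega

/-- `I` is an ideal of the subalgebra `N`. -/
def IsIdealIn (N I : Submodule K A) : Prop :=
  I ≤ N ∧ ∀ x ∈ I, ∀ a ∈ N, x * a ∈ I ∧ a * x ∈ I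

/-- The (sub)algebra `N` is decomposable: it is the direct sum of two nonzero
ideals of `N`. -/
def DecomposableIn (N : Submodule K A) : Prop :=
  ∃ I J : Submodule K A, IsIdealIn N I ∧ IsIdealIn N J ∧ I ≠ ⊥ ∧ J ≠ ⊥ ∧
    I ⊓ J = ⊥ ∧ I ⊔ J = N

/-- Multiplication inside an ideal `N` (an ideal is closed under products). -/
def subMul {N : Submodule K A} (hN : IsIdeal N) (x y : N) : N :=
  ⟨(x : A) * (y : A), (hN x x.2 y).1⟩

/-- The induced multiplication on the quotient `A ⧸ I` by an ideal `I`. -/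
def quotMul (I : Submodule K A) (hI : IsIdeal I) (x y : A ⧸ I) : A ⧸ I :=
  Quotient.liftOn₂ x y (fun a b => Submodule.Quotient.mk (a * b)) (by
    intro a b a' b' ha hb
    have ha' : a - a' ∈ I := (Submodule.quotientRel_def I).mp ha
    have hb' : b - b' ∈ I := (Submodule.quotientRel_def I).mp hb
    refine (Submodule.Quotient.eq I).mpr ?_
    have h : a * b - a' * b' = a * (b - b') + (a - a') * b' := by
      rw [mul_sub, sub_mul]; abel
    rw [h]
    exact add_mem (hI _ hb' a).2 (hI _ ha' b').1)

/-- Edge relation of the graph associated to the quotient evolution algebra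
`A ⧸ I` relative to a basis `C`. -/
def edgeQ {κ : Type*} (I : Submodule K A) (hI : IsIdeal I)
    (C : Module.Basis κ K (A ⧸ I)) (i k : κ) : Prop :=
  C.repr (quotMul I hI (C i) (C i)) k ≠ 0

end EvolutionPreamble

section AuxLemmas

variable {K : Type*} [Field K] {A : Type*} [NonUnitalNonAssocRing A]
  [Module K A] [SMulCommClass K A A] [IsScalarTower K A A] {ι : Type*}

lemma mul_basis_right (B : Module.Basis ι K A) (hB : IsNaturalBasis B) (x : A) (i : ι) :
    x * B i = B.repr x i • (B i * B i) := by
  conv_lhs => rw [← B.linearCombination_repr x]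
  rw [Finsupp.linearCombination_apply, Finsupp.sum, Finset.sum_mul]
  rw [Finset.sum_eq_single i]
  · rw [smul_mul_assoc]
  · intro j _ hj
    rw [smul_mul_assoc, hB j i hj, smul_zero]
  · intro hi
    rw [Finsupp.notMem_support_iff.mp hi, zero_smul, zero_mul]

lemma mul_basis_left (B : Module.Basis ι K A) (hB : IsNaturalBasis B) (x : A) (i : ι) :
    B i * x = B.repr x i • (B i * B i) := by
  conv_lhs => rw [← B.linearCombination_repr x]
  rw [Finsupp.linearCombination_apply, Finsupp.sum, Finset.mul_sum]
  rw [Finset.sum_eq_single i]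
  · rw [mul_smul_comm]
  · intro j _ hj
    rw [mul_smul_comm, hB i j (Ne.symm hj), smul_zero]
  · intro hi
    rw [Finsupp.notMem_support_iff.mp hi, zero_smul, mul_zero]

lemma mem_annSeries_succ {x : A} {n : ℕ} :
    x ∈ annSeries K A (n + 1) ↔
      ∀ a : A, x * a ∈ annSeries K A n ∧ a * x ∈ annSeries K A n :=
  Iff.rfl

lemma lam_succ_mono (B : Module.Basis ι K A) : ∀ n, lam B n ⊆ lam B (n + 1) := by
  intro n
  induction n with
  | zero => intro i hi; exact absurd hi (Set.notMem_empty i)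
  | succ n ih => intro i hi k hk; exact ih (hi k hk)

lemma lam_mono (B : Module.Basis ι K A) {m n : ℕ} (h : m ≤ n) : lam B m ⊆ lam B n := by
  induction h with
  | refl => exact subset_rfl
  | step _ ih => exact ih.trans (lam_succ_mono B _)

lemma span_lam_eq (B : Module.Basis ι K A) (hB : IsNaturalBasis B) :
    ∀ n, Submodule.span K (B '' lam B n) = annSeries K A n := by
  intro n
  induction n with
  | zero =>
    show Submodule.span K (B '' (∅ : Set ι)) = ⊥
    rw [Set.image_empty, Submodule.span_empty]
  | succ n ih =>
    apply le_antisymm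
    · rw [Submodule.span_le]
      rintro _ ⟨i, hi, rfl⟩
      rw [SetLike.mem_coe, mem_annSeries_succ]
      intro a
      have hsq : B i * B i ∈ annSeries K A n := by
        rw [← ih]
        rw [Module.Basis.mem_span_image]
        intro k hk
        exact hi k (Finsupp.mem_support_iff.mp hk)
      constructor
      · rw [mul_basis_left B hB a i]
        exact Submodule.smul_mem _ _ hsq
      · rw [mul_basis_right B hB a i]
        exact Submodule.smul_mem _ _ hsq
    · intro x hx
      rw [mem_annSeries_succ] at hx
      rw [Module.Basis.mem_span_image]
      intro k hk
      have hk' : B.repr x k ≠ 0 := Finsupp.mem_support_iff.mp hk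
      have h1 : x * B k ∈ annSeries K A n := (hx (B k)).1
      rw [mul_basis_right B hB x k] at h1
      have hsq : B k * B k ∈ annSeries K A n := by
        have := Submodule.smul_mem (annSeries K A n) (B.repr x k)⁻¹ h1
        rwa [inv_smul_smul₀ hk'] at this
      intro j hj
      rw [← ih, Module.Basis.mem_span_image] at hsq
      exact hsq (Finsupp.mem_support_iff.mpr hj)

lemma exists_lam_stab (B : Module.Basis ι K A) [Fintype ι] :
    ∃ n, lam B n = lam B (n + 1) := by
  by_contra h
  push_neg at h
  have key : ∀ n, n ≤ (lam B n).ncard := by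
    intro n
    induction n with
    | zero => exact Nat.zero_le _
    | succ n ih =>
      have hss : lam B n ⊂ lam B (n + 1) :=
        HasSubset.Subset.ssubset_of_ne (lam_succ_mono B n) (h n)
      have := Set.ncard_lt_ncard hss (Set.toFinite _)
      omega
  have hb : (lam B (Nat.card ι + 1)).ncard ≤ Nat.card ι := by
    have := Set.ncard_le_ncard (Set.subset_univ (lam B (Nat.card ι + 1)))
      Set.finite_univ
    rwa [Set.ncard_univ] at this
  have := key (Nat.card ι + 1)
  omega

lemma exists_ann_stab (B : Module.Basis ι K A) (hB : IsNaturalBasis B) [Fintype ι] :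
    ∃ n, annSeries K A n = annSeries K A (n + 1) := by
  obtain ⟨n, hn⟩ := exists_lam_stab B
  exact ⟨n, by rw [← span_lam_eq B hB, ← span_lam_eq B hB, hn]⟩

lemma annSeries_le_rad : ∀ n, annSeries K A n ≤ rad K A := by
  intro n
  induction n with
  | zero => exact bot_le
  | succ n ih =>
    intro x hx
    rw [rad, Submodule.mem_sInf]
    intro I hI
    apply hI.2
    intro a
    exact (sInf_le hI : rad K A ≤ I) (ih (hx a).1)

lemma annSeries_one : annSeries K A 1 = annSub K A := by
  ext x
  constructor
  · intro hx a
    have := hx a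
    simpa [annSeries, Submodule.mem_bot] using this
  · intro hx a
    have := hx a
    simp [annSeries, Submodule.mem_bot, this.1, this.2]

end AuxLemmas

/-- In a degenerate evolution algebra with connected graph and `A ≠ rad(A)`,
the complementary span of the radical is not an ideal. -/
theorem stmt16 {K : Type*} [Field K] {A : Type*} [NonUnitalNonAssocRing A]
    [Module K A] [SMulCommClass K A A] [IsScalarTower K A A]
    {ι : Type*} [Fintype ι] (B : Module.Basis ι K A) (hB : IsNaturalBasis B)
    (hdeg : annSub K A ≠ ⊥) (hne : rad K A ≠ (⊤ : Submodule K A))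
    (hconn : GraphConnected (edge B)) :
    ¬ IsIdeal (Submodule.span K (B '' (lam B (asi K A))ᶜ)) := by
  intro hV
  set m := asi K A with hm
  have hstab : annSeries K A m = annSeries K A (m + 1) :=
    Nat.sInf_mem (exists_ann_stab B hB)
  -- m ≠ 0
  have hm0 : m ≠ 0 := by
    intro h0
    apply hdeg
    rw [← annSeries_one]
    rw [h0] at hstab
    exact hstab.symm
  -- λ_m is stable
  have hlam : lam B m = lam B (m + 1) := by
    apply Set.Subset.antisymm (lam_succ_mono B m)
    intro i hi
    have hBi : B i ∈ Submodule.span K (B '' lam B m) := by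
      rw [span_lam_eq B hB, hstab, ← span_lam_eq B hB]
      exact Submodule.subset_span ⟨i, hi, rfl⟩
    have hsupp := B.mem_span_image.mp hBi
    apply hsupp
    rw [Finset.mem_coe, Finsupp.mem_support_iff, Module.Basis.repr_self,
      Finsupp.single_eq_same]
    exact one_ne_zero
  -- λ_m is nonempty
  obtain ⟨x0, hx0ann, hx0⟩ := (Submodule.ne_bot_iff _).mp hdeg
  obtain ⟨i0, hi0⟩ : ∃ i, B.repr x0 i ≠ 0 := by
    by_contra h
    push_neg at h
    apply hx0
    have : B.repr x0 = 0 := Finsupp.ext h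
    exact (LinearEquiv.map_eq_zero_iff B.repr).mp this
  have hsq0 : B i0 * B i0 = 0 := by
    have h1 : x0 * B i0 = 0 := (hx0ann (B i0)).1
    rw [mul_basis_right B hB x0 i0] at h1
    rcases smul_eq_zero.mp h1 with h | h
    · exact absurd h hi0
    · exact h
  have hi0lam : i0 ∈ lam B m := by
    apply lam_mono B (Nat.one_le_iff_ne_zero.mpr hm0)
    intro k hk
    rw [edge, hsq0] at hk
    simp at hk
  -- λ_mᶜ is nonempty
  have hcompl : ((lam B m)ᶜ).Nonempty := by
    by_contra h
    rw [Set.not_nonempty_iff_eq_empty, Set.compl_empty_iff] at h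
    apply hne
    rw [eq_top_iff]
    calc (⊤ : Submodule K A) = Submodule.span K (Set.range B) := B.span_eq.symm
      _ = Submodule.span K (B '' lam B m) := by rw [h, Set.image_univ]
      _ = annSeries K A m := span_lam_eq B hB m
      _ ≤ rad K A := annSeries_le_rad m
  -- connectedness gives a crossing edge
  obtain ⟨x, hx, y, hy, hxy⟩ := hconn (lam B m) ⟨i0, hi0lam⟩ hcompl
  rcases hxy with h | h
  · -- edge x y with x ∈ λ_m : contradicts stability
    rw [hlam] at hx
    exact hy (hx y h)
  · -- edge y x with y ∉ λ_m : contradicts V being an ideal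
    have hBy : B y ∈ Submodule.span K (B '' (lam B m)ᶜ) :=
      Submodule.subset_span ⟨y, hy, rfl⟩
    have hsq : B y * B y ∈ Submodule.span K (B '' (lam B m)ᶜ) :=
      (hV (B y) hBy (B y)).1
    have hsupp := B.mem_span_image.mp hsq
    exact hsupp (Finsupp.mem_support_iff.mpr h) hx
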